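/- Let b1, b2 > 0, let u, v, t > 0 satisfy u·t < 1 and v·t < 1, and let n ≥ 1 be an integer. Then (−1)^n·((1+ut)^{−b1}(1+vt)^{−b2} − Σ_{k=0}^{n−1} (−1)^k t^k Σ_{m=0}^{k} (b1)_m (b2)_{k−m} u^m v^{k−m}/(m!(k−m)!)) > 0. -/

import Mathlib

open Real

noncomputable def poch (a : ℝ) (k : ℕ) : ℝ := (ascPochhammer ℝ k).eval a

lemma poch_succ (a : ℝ) (m : ℕ) : poch a (m+1) = a * poch (a+1) m := by
  simp [poch, ascPochhammer_succ_left, Polynomial.eval_comp, mul_comm]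

noncomputable def cc (u v b1 b2 : ℝ) (k : ℕ) : ℝ :=
  ∑ m ∈ Finset.range (k + 1),
    poch b1 m * poch b2 (k - m) * u ^ m * v ^ (k - m) /
      ((Nat.factorial m : ℝ) * (Nat.factorial (k - m) : ℝ))

lemma cc_zero (u v b1 b2 : ℝ) : cc u v b1 b2 0 = 1 := by
  simp [cc, poch]

lemma cc_rec (u v b1 b2 : ℝ) (k : ℕ) :
    ((k : ℝ) + 1) * cc u v b1 b2 (k+1)
      = b1 * u * cc u v (b1+1) b2 k + b2 * v * cc u v b1 (b2+1) k := by
  have hA : ∑ m ∈ Finset.range (k + 2),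
      (m : ℝ) * (poch b1 m * poch b2 (k + 1 - m) * u ^ m * v ^ (k + 1 - m) /
        ((Nat.factorial m : ℝ) * (Nat.factorial (k + 1 - m) : ℝ)))
      = b1 * u * cc u v (b1+1) b2 k := by
    rw [Finset.sum_range_succ']
    simp only [Nat.cast_zero, zero_mul, add_zero]
    rw [cc, Finset.mul_sum]
    refine Finset.sum_congr rfl fun j hj => ?_
    have h1 : k + 1 - (j + 1) = k - j := by omega
    rw [h1, poch_succ, pow_succ, Nat.factorial_succ]
    have hfj : (Nat.factorial j : ℝ) ≠ 0 := Nat.cast_ne_zero.2 (Nat.factorial_ne_zero j)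
    have hfkj : (Nat.factorial (k - j) : ℝ) ≠ 0 := Nat.cast_ne_zero.2 (Nat.factorial_ne_zero _)
    have hj1 : ((j : ℝ) + 1) ≠ 0 := by positivity
    push_cast
    field_simp
  have hB : ∑ m ∈ Finset.range (k + 2),
      ((k + 1 - m : ℕ) : ℝ) * (poch b1 m * poch b2 (k + 1 - m) * u ^ m * v ^ (k + 1 - m) /
        ((Nat.factorial m : ℝ) * (Nat.factorial (k + 1 - m) : ℝ)))
      = b2 * v * cc u v b1 (b2+1) k := by
    rw [Finset.sum_range_succ]
    simp only [Nat.sub_self, Nat.cast_zero, zero_mul, add_zero]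
    rw [cc, Finset.mul_sum]
    refine Finset.sum_congr rfl fun m hm => ?_
    have hmk : m ≤ k := by simpa [Nat.lt_succ_iff] using Finset.mem_range.1 hm
    have h1 : k + 1 - m = (k - m) + 1 := by omega
    rw [h1, poch_succ, pow_succ, Nat.factorial_succ]
    have hfm : (Nat.factorial m : ℝ) ≠ 0 := Nat.cast_ne_zero.2 (Nat.factorial_ne_zero m)
    have hfkm : (Nat.factorial (k - m) : ℝ) ≠ 0 := Nat.cast_ne_zero.2 (Nat.factorial_ne_zero _)
    have hmkR : (m : ℝ) ≤ (k : ℝ) := Nat.cast_le.2 hmk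
    have hne : ((k : ℝ) - (m : ℝ) + 1) ≠ 0 := by linarith
    push_cast
    field_simp
  rw [← hA, ← hB, cc, Finset.mul_sum, ← Finset.sum_add_distrib]
  refine Finset.sum_congr rfl fun m hm => ?_
  have hmk : m ≤ k + 1 := by simpa [Nat.lt_succ_iff] using Finset.mem_range.1 hm
  have hc : ((k + 1 - m : ℕ) : ℝ) = (k : ℝ) + 1 - (m : ℝ) := by
    push_cast [Nat.cast_sub hmk]; ring
  rw [hc]; ring

noncomputable def FF (u v b1 b2 : ℝ) (n : ℕ) (t : ℝ) : ℝ :=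
  (1 + u * t) ^ (-b1) * (1 + v * t) ^ (-b2) -
    ∑ k ∈ Finset.range n, (-1 : ℝ) ^ k * t ^ k * cc u v b1 b2 k

lemma deriv_sum_eq (u v b1 b2 s : ℝ) (n : ℕ) :
    ∑ k ∈ Finset.range (n+1), ((-1 : ℝ) ^ k * ((k : ℝ) * s ^ (k-1))) * cc u v b1 b2 k
      = -(b1 * u * ∑ k ∈ Finset.range n, (-1 : ℝ) ^ k * s ^ k * cc u v (b1+1) b2 k
          + b2 * v * ∑ k ∈ Finset.range n, (-1 : ℝ) ^ k * s ^ k * cc u v b1 (b2+1) k) := by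
  rw [Finset.sum_range_succ']
  simp only [Nat.cast_zero, zero_mul, mul_zero, zero_mul, add_zero]
  rw [Finset.mul_sum, Finset.mul_sum, ← Finset.sum_add_distrib, ← Finset.sum_neg_distrib]
  refine Finset.sum_congr rfl fun j hj => ?_
  have h1 : j + 1 - 1 = j := rfl
  have : ((-1 : ℝ) ^ (j+1) * (((j:ℕ)+1 : ℕ) * s ^ (j + 1 - 1))) * cc u v b1 b2 (j+1)
      = (-1 : ℝ) ^ (j+1) * s ^ j * (((j : ℝ) + 1) * cc u v b1 b2 (j+1)) := by
    push_cast; ring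
  rw [this, cc_rec]
  ring

lemma FF_hasDerivAt (u v b1 b2 : ℝ) (n : ℕ) (s : ℝ)
    (h1 : 0 < 1 + u * s) (h2 : 0 < 1 + v * s) :
    HasDerivAt (FF u v b1 b2 (n+1))
      (-(b1 * u * FF u v (b1+1) b2 n s + b2 * v * FF u v b1 (b2+1) n s)) s := by
  have ha : HasDerivAt (fun x : ℝ => 1 + u * x) u s := by
    simpa using ((hasDerivAt_id s).const_mul u).const_add 1
  have hb : HasDerivAt (fun x : ℝ => 1 + v * x) v s := by
    simpa using ((hasDerivAt_id s).const_mul v).const_add 1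
  have hA : HasDerivAt (fun x : ℝ => (1 + u * x) ^ (-b1))
      ((-b1 * (1 + u * s) ^ (-b1 - 1)) * u) s :=
    by have := (Real.hasDerivAt_rpow_const (p := -b1) (Or.inl h1.ne')).comp s ha; exact this
  have hB : HasDerivAt (fun x : ℝ => (1 + v * x) ^ (-b2))
      ((-b2 * (1 + v * s) ^ (-b2 - 1)) * v) s :=
    by have := (Real.hasDerivAt_rpow_const (p := -b2) (Or.inl h2.ne')).comp s hb; exact this
  have hS : HasDerivAt (fun x : ℝ => ∑ k ∈ Finset.range (n+1),
        (-1 : ℝ) ^ k * x ^ k * cc u v b1 b2 k)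
      (∑ k ∈ Finset.range (n+1), ((-1 : ℝ) ^ k * ((k : ℝ) * s ^ (k-1))) * cc u v b1 b2 k) s := by
    refine HasDerivAt.fun_sum fun k hk => ?_
    simpa [mul_assoc] using ((hasDerivAt_pow k s).const_mul ((-1 : ℝ)^k)).mul_const (cc u v b1 b2 k)
  have htot := (hA.mul hB).sub hS
  have heq : ((-b1 * (1 + u * s) ^ (-b1 - 1)) * u) * (1 + v * s) ^ (-b2)
        + (1 + u * s) ^ (-b1) * ((-b2 * (1 + v * s) ^ (-b2 - 1)) * v)
        - ∑ k ∈ Finset.range (n+1), ((-1 : ℝ) ^ k * ((k : ℝ) * s ^ (k-1))) * cc u v b1 b2 k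
      = -(b1 * u * FF u v (b1+1) b2 n s + b2 * v * FF u v b1 (b2+1) n s) := by
    rw [deriv_sum_eq]
    have e1 : (1 + u * s) ^ (-b1 - 1) = (1 + u * s) ^ (-(b1 + 1)) := by ring_nf
    have e2 : (1 + v * s) ^ (-b2 - 1) = (1 + v * s) ^ (-(b2 + 1)) := by ring_nf
    rw [e1, e2]
    simp only [FF]
    ring
  rw [← heq]
  exact htot

lemma main (u v : ℝ) (hu : 0 < u) (hv : 0 < v) :
    ∀ n : ℕ, ∀ b1 b2 : ℝ, 0 < b1 → 0 < b2 → ∀ t : ℝ, 0 < t →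
      0 < (-1 : ℝ) ^ n * FF u v b1 b2 n t := by
  intro n
  induction n with
  | zero =>
    intro b1 b2 hb1 hb2 t ht
    have h1 : (0:ℝ) < 1 + u * t := by positivity
    have h2 : (0:ℝ) < 1 + v * t := by positivity
    simp only [FF, Finset.range_zero, Finset.sum_empty, sub_zero, pow_zero, one_mul]
    exact mul_pos (Real.rpow_pos_of_pos h1 _) (Real.rpow_pos_of_pos h2 _)
  | succ n ih =>
    intro b1 b2 hb1 hb2 t ht
    set G : ℝ → ℝ := fun s => (-1 : ℝ) ^ (n+1) * FF u v b1 b2 (n+1) s with hG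
    have hpos : ∀ s : ℝ, 0 ≤ s → 0 < 1 + u * s ∧ 0 < 1 + v * s := by
      intro s hs
      constructor <;> nlinarith [mul_nonneg hu.le hs, mul_nonneg hv.le hs]
    have hderiv : ∀ s : ℝ, 0 ≤ s → HasDerivAt G
        ((-1 : ℝ) ^ (n+1) * -(b1 * u * FF u v (b1+1) b2 n s + b2 * v * FF u v b1 (b2+1) n s)) s := by
      intro s hs
      exact (FF_hasDerivAt u v b1 b2 n s (hpos s hs).1 (hpos s hs).2).const_mul _
    have hcont : ContinuousOn G (Set.Icc 0 t) := by
      intro s hs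
      exact (hderiv s hs.1).continuousAt.continuousWithinAt
    have hmono : StrictMonoOn G (Set.Icc 0 t) := by
      refine strictMonoOn_of_deriv_pos (convex_Icc 0 t) hcont ?_
      intro s hs
      rw [interior_Icc] at hs
      rw [(hderiv s hs.1.le).deriv]
      have e : (-1 : ℝ) ^ (n+1) * -(b1 * u * FF u v (b1+1) b2 n s + b2 * v * FF u v b1 (b2+1) n s)
          = b1 * u * ((-1 : ℝ) ^ n * FF u v (b1+1) b2 n s)
            + b2 * v * ((-1 : ℝ) ^ n * FF u v b1 (b2+1) n s) := by
        rw [pow_succ]; ring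
      rw [e]
      have p1 := ih (b1+1) b2 (by linarith) hb2 s hs.1
      have p2 := ih b1 (b2+1) hb1 (by linarith) s hs.1
      have := mul_pos (mul_pos hb1 hu) p1
      have := mul_pos (mul_pos hb2 hv) p2
      linarith
    have h0 : G 0 = 0 := by
      have hsum : ∑ k ∈ Finset.range (n+1), (-1 : ℝ) ^ k * (0:ℝ) ^ k * cc u v b1 b2 k = 1 := by
        rw [Finset.sum_eq_single 0]
        · simp [cc_zero]
        · intro k hk hk0
          simp [zero_pow hk0]
        · simp
      simp [hG, FF, hsum]
    have := hmono (Set.left_mem_Icc.2 ht.le) (Set.right_mem_Icc.2 ht.le) ht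
    rw [h0] at this
    exact this

/-- sign of the tail of the double binomial expansion of
`(1+ut)^{-b₁}(1+vt)^{-b₂}`. -/
theorem h_tail_sign (b1 b2 u v t : ℝ) (n : ℕ) (hb1 : 0 < b1) (hb2 : 0 < b2)
    (hu : 0 < u) (hv : 0 < v) (ht : 0 < t) (hut : u * t < 1) (hvt : v * t < 1)
    (hn : 1 ≤ n) :
    0 < (-1 : ℝ) ^ n *
      ((1 + u * t) ^ (-b1) * (1 + v * t) ^ (-b2) -
        ∑ k ∈ Finset.range n, (-1 : ℝ) ^ k * t ^ k *
          ∑ m ∈ Finset.range (k + 1),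
            poch b1 m * poch b2 (k - m) * u ^ m * v ^ (k - m) /
              ((Nat.factorial m : ℝ) * (Nat.factorial (k - m) : ℝ))) := by
  have := main u v hu hv n b1 b2 hb1 hb2 t ht
  simpa [FF, cc] using this
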